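/- arXiv:2010.12487 — 2 statements merged into one kernel-verified Lean document; each statement's English description precedes it below -/
import Mathlib

section
/- Let d ≥ 2, ν > 0, let u_1,…,u_d be positive reals and let f : ℝ^d → ℝ be measurable and bounded on the closed Euclidean unit ball. Let S be the LIME random subset of {1,…,d} with z_j = 1{j∉S}, π = ψ_ν(|S|/d), ζ = (1, z_1,…,z_d), Σ = E[π ζ ζᵀ], Γ^f = E[π f(φ_S) ζ], and β^f = Σ⁻¹ Γ^f ∈ ℝ^{d+1}. Then the intercept satisfies β^f_0 = c_d⁻¹ (σ_0 E[π f(φ_S)] + σ_1 Σ_{k=1}^d E[π z_k f(φ_S)]), and for every 1 ≤ j ≤ d, β^f_j = c_d⁻¹ (σ_1 E[π f(φ_S)] + σ_2 E[π z_j f(φ_S)] + σ_3 Σ_{k=1, k≠j}^d E[π z_k f(φ_S)]). -/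
noncomputable section

/-- The LIME weight function ψ_ν(t) = exp(−(1−√(1−t))²/(2ν²)). -/
def psi (ν t : ℝ) : ℝ := Real.exp (-(1 - Real.sqrt (1 - t)) ^ 2 / (2 * ν ^ 2))

/-- Expectation of `g S` where `S` is the LIME random subset of `{1,…,d}`:
first draw `s` uniformly in `{1,…,d}`, then `S` uniformly among subsets of cardinality `s`. -/
def limeExp (d : ℕ) (g : Finset (Fin d) → ℝ) : ℝ :=
  (1 / (d : ℝ)) * ∑ s ∈ Finset.Icc 1 d, ((d.choose s : ℝ))⁻¹ *
    ∑ S ∈ Finset.univ.filter (fun S : Finset (Fin d) => S.card = s), g S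

/-- The coefficient α_p(d,ν). -/
def alpha (d : ℕ) (ν : ℝ) (p : ℕ) : ℝ :=
  (1 / (d : ℝ)) * ∑ s ∈ Finset.Icc 1 d,
    (∏ k ∈ Finset.range p, (((d : ℝ) - (s : ℝ) - (k : ℝ)) / ((d : ℝ) - (k : ℝ)))) *
      psi ν ((s : ℝ) / (d : ℝ))

/-- The normalization constant c_d = (d−1)α₀α₂ − dα₁² + α₀α₁. -/
def cConst (d : ℕ) (ν : ℝ) : ℝ :=
  ((d : ℝ) - 1) * alpha d ν 0 * alpha d ν 2 - (d : ℝ) * (alpha d ν 1) ^ 2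
    + alpha d ν 0 * alpha d ν 1

/-- σ₀ = (d−1)α₂ + α₁. -/
def sigma0 (d : ℕ) (ν : ℝ) : ℝ := ((d : ℝ) - 1) * alpha d ν 2 + alpha d ν 1

/-- σ₁ = −α₁. -/
def sigma1 (d : ℕ) (ν : ℝ) : ℝ := -(alpha d ν 1)

/-- σ₂ = ((d−2)α₀α₂ − (d−1)α₁² + α₀α₁)/(α₁−α₂). -/
def sigma2 (d : ℕ) (ν : ℝ) : ℝ :=
  (((d : ℝ) - 2) * alpha d ν 0 * alpha d ν 2 - ((d : ℝ) - 1) * (alpha d ν 1) ^ 2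
      + alpha d ν 0 * alpha d ν 1) / (alpha d ν 1 - alpha d ν 2)

/-- σ₃ = (α₁² − α₀α₂)/(α₁−α₂). -/
def sigma3 (d : ℕ) (ν : ℝ) : ℝ :=
  ((alpha d ν 1) ^ 2 - alpha d ν 0 * alpha d ν 2) / (alpha d ν 1 - alpha d ν 2)

/-- Normalized TF-IDF of the perturbed document obtained by deleting the words
indexed by `S`: `(φ_S)_j = 1{j ∉ S} · u_j / √(∑_{k ∉ S} u_k²)`, and `φ_S = 0`
when all words are deleted. -/
def phiS {d : ℕ} (u : Fin d → ℝ) (S : Finset (Fin d)) : Fin d → ℝ :=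
  if S = Finset.univ then 0 else
    fun j => (if j ∉ S then (1 : ℝ) else 0) * u j / Real.sqrt (∑ k ∈ Sᶜ, (u k) ^ 2)

/-- The vector of interpretable features with a leading 1 for the intercept:
ζ(S) = (1, z₁, …, z_d) with z_j = 1{j ∉ S}. -/
def zeta (d : ℕ) (S : Finset (Fin d)) : Fin (d + 1) → ℝ :=
  Fin.cons 1 (fun j : Fin d => if j ∉ S then (1 : ℝ) else 0)

/-- Σ = E[π ζ ζᵀ] ∈ ℝ^{(d+1)×(d+1)}. -/
def SigmaE (d : ℕ) (ν : ℝ) : Matrix (Fin (d + 1)) (Fin (d + 1)) ℝ :=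
  Matrix.of fun a b =>
    limeExp d (fun S => psi ν ((S.card : ℝ) / (d : ℝ)) * zeta d S a * zeta d S b)

/-- β^f = Σ⁻¹ Γ^f, where Γ^f = E[π f(φ_S) ζ] and `g S` stands for `f (φ_S)`. -/
def betaF (d : ℕ) (ν : ℝ) (g : Finset (Fin d) → ℝ) : Fin (d + 1) → ℝ :=
  (SigmaE d ν)⁻¹.mulVec
    (fun a => limeExp d (fun S => psi ν ((S.card : ℝ) / (d : ℝ)) * g S * zeta d S a))

lemma count_disj {d s : ℕ} (T : Finset (Fin d)) :
    ∑ S ∈ Finset.univ.filter (fun S : Finset (Fin d) => S.card = s),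
      (if Disjoint T S then (1:ℝ) else 0) = ((d - T.card).choose s : ℝ) := by
  rw [Finset.sum_boole]
  congr 1
  rw [Finset.filter_filter]
  have : Finset.filter (fun S : Finset (Fin d) => S.card = s ∧ Disjoint T S) Finset.univ
      = Tᶜ.powersetCard s := by
    ext S
    simp [Finset.mem_powersetCard, and_comm, Finset.subset_compl_comm,
      Finset.disjoint_left, Finset.subset_iff]
    tauto
  rw [this, Finset.card_powersetCard, Finset.card_compl, Fintype.card_fin]

lemma ratio1 {d s : ℕ} (hd : 1 ≤ d) (hs : s ∈ Finset.Icc 1 d) :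
    ((d.choose s : ℝ))⁻¹ * ((d - 1).choose s : ℝ) = ((d:ℝ) - s) / d := by
  simp only [Finset.mem_Icc] at hs
  have h := Nat.choose_mul_succ_eq (d - 1) s
  rw [Nat.sub_add_cancel hd] at h
  have hc : (d.choose s : ℝ) ≠ 0 := by
    have := Nat.choose_pos hs.2
    positivity
  have hd0 : (d:ℝ) ≠ 0 := by positivity
  have hcast : ((d - 1).choose s : ℝ) * d = (d.choose s : ℝ) * ((d:ℝ) - s) := by
    have := congrArg (Nat.cast (R := ℝ)) h
    push_cast [Nat.cast_sub hs.2] at this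
    linarith [this]
  field_simp
  linarith [hcast]

lemma ratio2 {d s : ℕ} (hd : 2 ≤ d) (hs : s ∈ Finset.Icc 1 d) :
    ((d.choose s : ℝ))⁻¹ * ((d - 2).choose s : ℝ)
      = ((d:ℝ) - s) / d * (((d:ℝ) - s - 1) / ((d:ℝ) - 1)) := by
  simp only [Finset.mem_Icc] at hs
  have hd0 : (d:ℝ) ≠ 0 := by positivity
  have hd1 : (d:ℝ) - 1 ≠ 0 := by
    have : (2:ℝ) ≤ d := by exact_mod_cast hd
    linarith
  have hc : (d.choose s : ℝ) ≠ 0 := by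
    have := Nat.choose_pos hs.2
    positivity
  rcases eq_or_lt_of_le hs.2 with h | h
  · subst h
    have h1 : (s - 2).choose s = 0 := Nat.choose_eq_zero_of_lt (by omega)
    rw [h1]
    simp
  · -- s ≤ d - 1
    have hs1 : s ≤ d - 1 := by omega
    have h1 := Nat.choose_mul_succ_eq (d - 1) s
    rw [Nat.sub_add_cancel (by omega)] at h1
    have h2 := Nat.choose_mul_succ_eq (d - 2) s
    have e1 : d - 2 + 1 = d - 1 := by omega
    rw [e1] at h2
    -- h1 : (d-1).choose s * d = d.choose s * (d - s)
    -- h2 : (d-2).choose s * (d-1) = (d-1).choose s * (d-1-s)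
    have c1 : ((d - 1).choose s : ℝ) * d = (d.choose s : ℝ) * ((d:ℝ) - s) := by
      have := congrArg (Nat.cast (R := ℝ)) h1
      push_cast [Nat.cast_sub hs.2] at this
      linarith
    have c2 : ((d - 2).choose s : ℝ) * ((d:ℝ) - 1) = ((d - 1).choose s : ℝ) * ((d:ℝ) - 1 - s) := by
      have := congrArg (Nat.cast (R := ℝ)) h2
      push_cast [Nat.cast_sub hs1, Nat.cast_sub (show 1 ≤ d by omega)] at this
      linarith
    field_simp
    nlinarith [c1, c2]

lemma limeExp_congr {d : ℕ} {g h : Finset (Fin d) → ℝ} (H : ∀ S, g S = h S) :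
    limeExp d g = limeExp d h := by
  unfold limeExp
  congr 1
  exact Finset.sum_congr rfl fun s _ => by
    congr 1
    exact Finset.sum_congr rfl fun S _ => H S

lemma limeExp_indicator {d : ℕ} (ν : ℝ) (T : Finset (Fin d)) :
    limeExp d (fun S => psi ν ((S.card : ℝ) / (d : ℝ)) * if Disjoint T S then 1 else 0)
      = (1 / (d : ℝ)) * ∑ s ∈ Finset.Icc 1 d,
          ((d.choose s : ℝ))⁻¹ * ((d - T.card).choose s : ℝ) * psi ν ((s : ℝ) / (d : ℝ)) := by
  unfold limeExp
  congr 1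
  refine Finset.sum_congr rfl fun s _ => ?_
  rw [mul_assoc]
  congr 1
  have : ∑ S ∈ Finset.univ.filter (fun S : Finset (Fin d) => S.card = s),
      (psi ν ((S.card : ℝ) / (d : ℝ)) * if Disjoint T S then 1 else 0)
      = ∑ S ∈ Finset.univ.filter (fun S : Finset (Fin d) => S.card = s),
      (psi ν ((s : ℝ) / (d : ℝ)) * if Disjoint T S then 1 else 0) := by
    refine Finset.sum_congr rfl fun S hS => ?_
    simp only [Finset.mem_filter] at hS
    rw [hS.2]
  rw [this, ← Finset.mul_sum, count_disj, mul_comm]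

lemma limeExp_alpha0 {d : ℕ} (hd : 1 ≤ d) (ν : ℝ) (T : Finset (Fin d)) (hT : T = ∅) :
    limeExp d (fun S => psi ν ((S.card : ℝ) / (d : ℝ)) * if Disjoint T S then 1 else 0)
      = alpha d ν 0 := by
  rw [limeExp_indicator, alpha]
  congr 1
  refine Finset.sum_congr rfl fun s hs => ?_
  simp only [Finset.mem_Icc] at hs
  have hc : (d.choose s : ℝ) ≠ 0 := by
    have := Nat.choose_pos hs.2
    positivity
  rw [hT]
  simp [hc]

lemma limeExp_alpha1 {d : ℕ} (hd : 1 ≤ d) (ν : ℝ) (T : Finset (Fin d)) (hT : T.card = 1) :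
    limeExp d (fun S => psi ν ((S.card : ℝ) / (d : ℝ)) * if Disjoint T S then 1 else 0)
      = alpha d ν 1 := by
  rw [limeExp_indicator, alpha]
  congr 1
  refine Finset.sum_congr rfl fun s hs => ?_
  rw [hT, ratio1 hd hs]
  simp

lemma limeExp_alpha2 {d : ℕ} (hd : 2 ≤ d) (ν : ℝ) (T : Finset (Fin d)) (hT : T.card = 2) :
    limeExp d (fun S => psi ν ((S.card : ℝ) / (d : ℝ)) * if Disjoint T S then 1 else 0)
      = alpha d ν 2 := by
  rw [limeExp_indicator, alpha]
  congr 1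
  refine Finset.sum_congr rfl fun s hs => ?_
  rw [hT, ratio2 hd hs]
  rw [Finset.prod_range_succ, Finset.prod_range_one]
  push_cast
  ring_nf

lemma zeta_zero {d : ℕ} (S : Finset (Fin d)) : zeta d S 0 = 1 := rfl

lemma zeta_succ {d : ℕ} (S : Finset (Fin d)) (j : Fin d) :
    zeta d S j.succ = if j ∉ S then (1:ℝ) else 0 := by
  simp [zeta]

lemma SigmaE_00 {d : ℕ} (hd : 1 ≤ d) (ν : ℝ) : SigmaE d ν 0 0 = alpha d ν 0 := by
  rw [show SigmaE d ν 0 0 = limeExp d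
      (fun S => psi ν ((S.card : ℝ) / (d : ℝ)) * zeta d S 0 * zeta d S 0) from rfl]
  rw [← limeExp_alpha0 hd ν ∅ rfl]
  exact limeExp_congr fun S => by simp [zeta_zero]

lemma SigmaE_0succ {d : ℕ} (hd : 1 ≤ d) (ν : ℝ) (j : Fin d) :
    SigmaE d ν 0 j.succ = alpha d ν 1 := by
  rw [show SigmaE d ν 0 j.succ = limeExp d
      (fun S => psi ν ((S.card : ℝ) / (d : ℝ)) * zeta d S 0 * zeta d S j.succ) from rfl]
  rw [← limeExp_alpha1 hd ν {j} (Finset.card_singleton j)]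
  refine limeExp_congr fun S => ?_
  simp [zeta_zero, zeta_succ, Finset.disjoint_singleton_left]

lemma SigmaE_succ0 {d : ℕ} (hd : 1 ≤ d) (ν : ℝ) (j : Fin d) :
    SigmaE d ν j.succ 0 = alpha d ν 1 := by
  rw [show SigmaE d ν j.succ 0 = limeExp d
      (fun S => psi ν ((S.card : ℝ) / (d : ℝ)) * zeta d S j.succ * zeta d S 0) from rfl]
  rw [← limeExp_alpha1 hd ν {j} (Finset.card_singleton j)]
  refine limeExp_congr fun S => ?_
  simp [zeta_zero, zeta_succ, Finset.disjoint_singleton_left]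

lemma SigmaE_diag {d : ℕ} (hd : 1 ≤ d) (ν : ℝ) (j : Fin d) :
    SigmaE d ν j.succ j.succ = alpha d ν 1 := by
  rw [show SigmaE d ν j.succ j.succ = limeExp d
      (fun S => psi ν ((S.card : ℝ) / (d : ℝ)) * zeta d S j.succ * zeta d S j.succ) from rfl]
  rw [← limeExp_alpha1 hd ν {j} (Finset.card_singleton j)]
  refine limeExp_congr fun S => ?_
  simp only [zeta_succ, Finset.disjoint_singleton_left]
  by_cases h : j ∈ S <;> simp [h]

lemma SigmaE_offdiag {d : ℕ} (hd : 2 ≤ d) (ν : ℝ) {j k : Fin d} (hjk : j ≠ k) :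
    SigmaE d ν j.succ k.succ = alpha d ν 2 := by
  rw [show SigmaE d ν j.succ k.succ = limeExp d
      (fun S => psi ν ((S.card : ℝ) / (d : ℝ)) * zeta d S j.succ * zeta d S k.succ) from rfl]
  have hcard : ({j, k} : Finset (Fin d)).card = 2 := by
    rw [Finset.card_insert_of_notMem (by simp [hjk]), Finset.card_singleton]
  rw [← limeExp_alpha2 hd ν {j, k} hcard]
  refine limeExp_congr fun S => ?_
  simp only [zeta_succ, Finset.disjoint_insert_left, Finset.disjoint_singleton_left]
  by_cases h1 : j ∈ S <;> by_cases h2 : k ∈ S <;> simp [h1, h2]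

section pos
variable {d : ℕ} {ν : ℝ}

lemma psi_pos (ν t : ℝ) : 0 < psi ν t := Real.exp_pos _

lemma alpha0_eq (hd : 1 ≤ d) (ν : ℝ) :
    alpha d ν 0 = (1 / (d:ℝ)) * ∑ s ∈ Finset.Icc 1 d, psi ν ((s:ℝ)/(d:ℝ)) := by
  unfold alpha; simp

lemma alpha1_eq (hd : 1 ≤ d) (ν : ℝ) :
    alpha d ν 1 = (1 / (d:ℝ)^2) * ∑ s ∈ Finset.Icc 1 d,
      ((d:ℝ) - s) * psi ν ((s:ℝ)/(d:ℝ)) := by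
  unfold alpha
  rw [Finset.mul_sum, Finset.mul_sum]
  refine Finset.sum_congr rfl fun s _ => ?_
  rw [Finset.prod_range_one]
  push_cast
  ring

lemma alpha2_eq (hd : 2 ≤ d) (ν : ℝ) :
    alpha d ν 2 = (1 / ((d:ℝ)^2 * ((d:ℝ) - 1))) * ∑ s ∈ Finset.Icc 1 d,
      ((d:ℝ) - s) * ((d:ℝ) - s - 1) * psi ν ((s:ℝ)/(d:ℝ)) := by
  unfold alpha
  rw [Finset.mul_sum, Finset.mul_sum]
  refine Finset.sum_congr rfl fun s _ => ?_
  have hd0 : (d:ℝ) ≠ 0 := by positivity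
  have hd1 : (d:ℝ) - 1 ≠ 0 := by
    have : (2:ℝ) ≤ d := by exact_mod_cast hd
    linarith
  rw [Finset.prod_range_succ, Finset.prod_range_one]
  push_cast
  field_simp
  ring_nf

lemma alpha_sub_pos (hd : 2 ≤ d) (ν : ℝ) : 0 < alpha d ν 1 - alpha d ν 2 := by
  have hd1 : (1:ℕ) ≤ d := by omega
  have hdR : (2:ℝ) ≤ d := by exact_mod_cast hd
  have hd0 : (0:ℝ) < d := by linarith
  have hd1R : (0:ℝ) < (d:ℝ) - 1 := by linarith
  rw [alpha1_eq hd1 ν, alpha2_eq hd ν]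
  have key : (1 / (d:ℝ)^2) * ∑ s ∈ Finset.Icc 1 d, ((d:ℝ) - s) * psi ν ((s:ℝ)/(d:ℝ))
      - (1 / ((d:ℝ)^2 * ((d:ℝ) - 1))) * ∑ s ∈ Finset.Icc 1 d,
        ((d:ℝ) - s) * ((d:ℝ) - s - 1) * psi ν ((s:ℝ)/(d:ℝ))
      = (1 / ((d:ℝ)^2 * ((d:ℝ) - 1))) * ∑ s ∈ Finset.Icc 1 d,
        ((d:ℝ) - s) * s * psi ν ((s:ℝ)/(d:ℝ)) := by
    rw [Finset.mul_sum, Finset.mul_sum, Finset.mul_sum, ← Finset.sum_sub_distrib]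
    refine Finset.sum_congr rfl fun s _ => ?_
    field_simp
    ring
  rw [key]
  apply mul_pos (by positivity)
  apply Finset.sum_pos'
  · intro s hs
    simp only [Finset.mem_Icc] at hs
    have h1 : (s:ℝ) ≤ d := by exact_mod_cast hs.2
    exact mul_nonneg (mul_nonneg (by linarith) (Nat.cast_nonneg s)) (psi_pos ν _).le
  · refine ⟨1, Finset.mem_Icc.mpr ⟨le_refl 1, hd1⟩, ?_⟩
    have hp := psi_pos ν ((1:ℕ):ℝ) -- dummy
    push_cast
    have := psi_pos ν (1/(d:ℝ))
    nlinarith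

lemma cConst_pos (hd : 2 ≤ d) (ν : ℝ) : 0 < cConst d ν := by
  have hd1 : (1:ℕ) ≤ d := by omega
  have hdR : (2:ℝ) ≤ d := by exact_mod_cast hd
  have hd0 : (0:ℝ) < d := by linarith
  have hd0' : (d:ℝ) ≠ 0 := ne_of_gt hd0
  have hd1R : (d:ℝ) - 1 ≠ 0 := by linarith
  set I := Finset.Icc 1 d with hI
  set W : ℕ → ℝ := fun s => psi ν ((s:ℝ)/(d:ℝ)) with hWdef
  set a : ℕ → ℝ := fun s => (d:ℝ) - s with hadef
  have hW : ∀ s, 0 < W s := fun s => psi_pos ν _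
  set SA := ∑ s ∈ I, W s with hSA
  set SB := ∑ s ∈ I, a s * W s with hSB
  set SC := ∑ s ∈ I, a s * (a s - 1) * W s with hSC
  have hA0 : alpha d ν 0 = SA / d := by
    rw [alpha0_eq hd1 ν]
    simp only [hSA, hI, hWdef]
    ring
  have hA1 : alpha d ν 1 = SB / (d:ℝ)^2 := by
    rw [alpha1_eq hd1 ν]
    simp only [hSB, hI, hWdef, hadef]
    ring
  have hA2 : alpha d ν 2 = SC / ((d:ℝ)^2 * ((d:ℝ) - 1)) := by
    rw [alpha2_eq hd ν]
    simp only [hSC, hI, hWdef, hadef]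
    ring
  have hc : cConst d ν = (SA * SC - SB^2 + SA * SB) / (d:ℝ)^3 := by
    rw [cConst, hA0, hA1, hA2]
    field_simp
  set X := ∑ s ∈ I, ∑ t ∈ I, W s * W t * (a t ^ 2 - a s * a t) with hX
  have key : SA * SC - SB^2 + SA * SB = X := by
    rw [hX, sq, hSA, hSB, hSC, Finset.sum_mul_sum, Finset.sum_mul_sum, Finset.sum_mul_sum,
      ← Finset.sum_sub_distrib, ← Finset.sum_add_distrib]
    refine Finset.sum_congr rfl fun s _ => ?_
    rw [← Finset.sum_sub_distrib, ← Finset.sum_add_distrib]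
    exact Finset.sum_congr rfl fun t _ => by ring
  set Q := ∑ s ∈ I, ∑ t ∈ I, W s * W t * (a s - a t)^2 with hQ
  have two : 2 * X = Q := by
    rw [two_mul]
    nth_rewrite 2 [hX]
    rw [Finset.sum_comm]
    rw [hX, hQ, ← Finset.sum_add_distrib]
    refine Finset.sum_congr rfl fun s _ => ?_
    rw [← Finset.sum_add_distrib]
    exact Finset.sum_congr rfl fun t _ => by ring
  have hQpos : 0 < Q := by
    rw [hQ]
    apply Finset.sum_pos'
    · intro s _
      exact Finset.sum_nonneg fun t _ =>
        mul_nonneg (mul_nonneg (hW s).le (hW t).le) (sq_nonneg _)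
    · refine ⟨1, Finset.mem_Icc.mpr ⟨le_refl 1, hd1⟩, ?_⟩
      apply Finset.sum_pos'
      · intro t _
        exact mul_nonneg (mul_nonneg (hW 1).le (hW t).le) (sq_nonneg _)
      · refine ⟨d, Finset.mem_Icc.mpr ⟨hd1, le_refl d⟩, ?_⟩
        have h1 : a 1 - a d = (d:ℝ) - 1 := by simp [hadef]
        rw [h1]
        have hsq : (0:ℝ) < ((d:ℝ) - 1)^2 := pow_pos (by linarith) 2
        exact mul_pos (mul_pos (hW 1) (hW d)) hsq
  have hXpos : 0 < X := by linarith
  rw [hc, key]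
  positivity
end pos

def Bmat (d : ℕ) (ν : ℝ) : Matrix (Fin (d + 1)) (Fin (d + 1)) ℝ :=
  Matrix.of fun a b =>
    Fin.cases
      (Fin.cases (sigma0 d ν / cConst d ν) (fun _ => sigma1 d ν / cConst d ν) b)
      (fun j => Fin.cases (sigma1 d ν / cConst d ν)
        (fun k => if j = k then sigma2 d ν / cConst d ν else sigma3 d ν / cConst d ν) b) a

lemma SigmaE_succ_succ {d : ℕ} (hd : 2 ≤ d) (ν : ℝ) (j k : Fin d) :
    SigmaE d ν j.succ k.succ = if j = k then alpha d ν 1 else alpha d ν 2 := by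
  by_cases h : j = k
  · subst h; simp [SigmaE_diag (by omega : 1 ≤ d) ν j]
  · simp [h, SigmaE_offdiag hd ν h]

lemma sum_split_one {d : ℕ} (f : Fin d → ℝ) (k : Fin d) :
    ∑ j, f j = f k + ∑ j ∈ Finset.univ.erase k, f j :=
  (Finset.add_sum_erase _ f (Finset.mem_univ k)).symm


lemma card_erase_univ {d : ℕ} (hd : 1 ≤ d) (k : Fin d) :
    ((Finset.univ.erase k).card : ℝ) = (d:ℝ) - 1 := by
  rw [Finset.card_erase_of_mem (Finset.mem_univ k), Finset.card_univ, Fintype.card_fin]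
  push_cast [Nat.cast_sub hd]
  ring


lemma Sigma_mul_B {d : ℕ} (hd : 2 ≤ d) (ν : ℝ) : SigmaE d ν * Bmat d ν = 1 := by
  have hd1 : (1:ℕ) ≤ d := by omega
  have hdR : (2:ℝ) ≤ d := by exact_mod_cast hd
  have hc : cConst d ν ≠ 0 := ne_of_gt (cConst_pos hd ν)
  have h12 : alpha d ν 1 - alpha d ν 2 ≠ 0 := ne_of_gt (alpha_sub_pos hd ν)
  refine Matrix.ext fun a b => ?_
  rw [Matrix.mul_apply, Fin.sum_univ_succ]
  induction b using Fin.cases with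
  | zero =>
    induction a using Fin.cases with
    | zero =>
      simp only [Bmat, Matrix.of_apply, Fin.cases_zero, Fin.cases_succ,
        SigmaE_00 hd1 ν, SigmaE_0succ hd1 ν, Matrix.one_apply_eq,
        Finset.sum_const, Finset.card_univ, Fintype.card_fin, nsmul_eq_mul]
      have e : alpha d ν 0 * (sigma0 d ν / cConst d ν)
          + (d:ℝ) * (alpha d ν 1 * (sigma1 d ν / cConst d ν))
          = (alpha d ν 0 * sigma0 d ν + (d:ℝ) * (alpha d ν 1 * sigma1 d ν)) / cConst d ν := by
        ring
      rw [e, div_eq_one_iff_eq hc, sigma0, sigma1, cConst]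
      ring
    | succ j =>
      simp only [Bmat, Matrix.of_apply, Fin.cases_zero, Fin.cases_succ,
        SigmaE_succ0 hd1 ν, SigmaE_succ_succ hd ν]
      rw [sum_split_one (fun k => (if j = k then alpha d ν 1 else alpha d ν 2) *
        (sigma1 d ν / cConst d ν)) j]
      have h1 : ∑ l ∈ Finset.univ.erase j, ((if j = l then alpha d ν 1 else alpha d ν 2) *
            (sigma1 d ν / cConst d ν))
          = ∑ l ∈ Finset.univ.erase j, alpha d ν 2 * (sigma1 d ν / cConst d ν) :=
        Finset.sum_congr rfl fun l hl => by
          rw [if_neg (Ne.symm (Finset.ne_of_mem_erase hl))]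
      rw [h1, Finset.sum_const, nsmul_eq_mul, card_erase_univ hd1, if_pos rfl,
        Matrix.one_apply_ne (Fin.succ_ne_zero j)]
      have e : alpha d ν 1 * (sigma0 d ν / cConst d ν) + (alpha d ν 1 * (sigma1 d ν / cConst d ν)
          + ((d:ℝ) - 1) * (alpha d ν 2 * (sigma1 d ν / cConst d ν)))
          = (alpha d ν 1 * sigma0 d ν + alpha d ν 1 * sigma1 d ν
            + ((d:ℝ) - 1) * (alpha d ν 2 * sigma1 d ν)) / cConst d ν := by
        ring
      rw [e, div_eq_zero_iff]
      left
      rw [sigma0, sigma1]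
      ring
  | succ k =>
    induction a using Fin.cases with
    | zero =>
      simp only [Bmat, Matrix.of_apply, Fin.cases_zero, Fin.cases_succ,
        SigmaE_00 hd1 ν, SigmaE_0succ hd1 ν]
      rw [sum_split_one (fun j => alpha d ν 1 *
        (if j = k then sigma2 d ν / cConst d ν else sigma3 d ν / cConst d ν)) k]
      have h1 : ∑ l ∈ Finset.univ.erase k, (alpha d ν 1 *
            (if l = k then sigma2 d ν / cConst d ν else sigma3 d ν / cConst d ν))
          = ∑ l ∈ Finset.univ.erase k, alpha d ν 1 * (sigma3 d ν / cConst d ν) :=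
        Finset.sum_congr rfl fun l hl => by
          rw [if_neg (Finset.ne_of_mem_erase hl)]
      rw [h1, Finset.sum_const, nsmul_eq_mul, card_erase_univ hd1, if_pos rfl,
        Matrix.one_apply_ne (Ne.symm (Fin.succ_ne_zero k))]
      have e : alpha d ν 0 * (sigma1 d ν / cConst d ν) + (alpha d ν 1 * (sigma2 d ν / cConst d ν)
          + ((d:ℝ) - 1) * (alpha d ν 1 * (sigma3 d ν / cConst d ν)))
          = (alpha d ν 0 * sigma1 d ν + alpha d ν 1 * sigma2 d ν
            + ((d:ℝ) - 1) * (alpha d ν 1 * sigma3 d ν)) / cConst d ν := by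
        ring
      rw [e, div_eq_zero_iff]
      left
      rw [sigma1, sigma2, sigma3]
      field_simp
      ring
    | succ j =>
      simp only [Bmat, Matrix.of_apply, Fin.cases_zero, Fin.cases_succ,
        SigmaE_succ0 hd1 ν, SigmaE_succ_succ hd ν]
      by_cases hjk : j = k
      · subst hjk
        rw [sum_split_one (fun l => (if j = l then alpha d ν 1 else alpha d ν 2) *
          (if l = j then sigma2 d ν / cConst d ν else sigma3 d ν / cConst d ν)) j]
        have h1 : ∑ l ∈ Finset.univ.erase j, ((if j = l then alpha d ν 1 else alpha d ν 2) *
              (if l = j then sigma2 d ν / cConst d ν else sigma3 d ν / cConst d ν))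
            = ∑ l ∈ Finset.univ.erase j, alpha d ν 2 * (sigma3 d ν / cConst d ν) :=
          Finset.sum_congr rfl fun l hl => by
            rw [if_neg (Ne.symm (Finset.ne_of_mem_erase hl)),
              if_neg (Finset.ne_of_mem_erase hl)]
        rw [h1, Finset.sum_const, nsmul_eq_mul, card_erase_univ hd1, if_pos rfl, if_pos rfl,
          Matrix.one_apply_eq]
        have e : alpha d ν 1 * (sigma1 d ν / cConst d ν) + (alpha d ν 1 * (sigma2 d ν / cConst d ν)
            + ((d:ℝ) - 1) * (alpha d ν 2 * (sigma3 d ν / cConst d ν)))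
            = (alpha d ν 1 * sigma1 d ν + alpha d ν 1 * sigma2 d ν
              + ((d:ℝ) - 1) * (alpha d ν 2 * sigma3 d ν)) / cConst d ν := by
          ring
        rw [e, div_eq_one_iff_eq hc, sigma1, sigma2, sigma3, cConst]
        field_simp
        ring
      · have hkj : k ∈ Finset.univ.erase j :=
          Finset.mem_erase.mpr ⟨fun h => hjk (h.symm), Finset.mem_univ k⟩
        rw [sum_split_one (fun l => (if j = l then alpha d ν 1 else alpha d ν 2) *
          (if l = k then sigma2 d ν / cConst d ν else sigma3 d ν / cConst d ν)) j]
        rw [← Finset.add_sum_erase _ (fun l => (if j = l then alpha d ν 1 else alpha d ν 2) *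
          (if l = k then sigma2 d ν / cConst d ν else sigma3 d ν / cConst d ν)) hkj]
        have h1 : ∑ l ∈ (Finset.univ.erase j).erase k,
              ((if j = l then alpha d ν 1 else alpha d ν 2) *
              (if l = k then sigma2 d ν / cConst d ν else sigma3 d ν / cConst d ν))
            = ∑ l ∈ (Finset.univ.erase j).erase k, alpha d ν 2 * (sigma3 d ν / cConst d ν) :=
          Finset.sum_congr rfl fun l hl => by
            rw [if_neg (Ne.symm (Finset.ne_of_mem_erase (Finset.mem_of_mem_erase hl))),
              if_neg (Finset.ne_of_mem_erase hl)]
        have hcard2 : ((((Finset.univ.erase j).erase k).card : ℕ) : ℝ) = (d:ℝ) - 2 := by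
          rw [Finset.card_erase_of_mem hkj, Finset.card_erase_of_mem (Finset.mem_univ j),
            Finset.card_univ, Fintype.card_fin]
          have h2 : d - 1 - 1 = d - 2 := by omega
          rw [h2]
          push_cast [Nat.cast_sub hd]
          ring
        rw [h1, Finset.sum_const, nsmul_eq_mul, hcard2, if_pos rfl, if_neg hjk,
          if_neg hjk, if_pos rfl,
          Matrix.one_apply_ne (fun h => hjk (Fin.succ_injective d h))]
        have e : alpha d ν 1 * (sigma1 d ν / cConst d ν)
            + (alpha d ν 1 * (sigma3 d ν / cConst d ν)
              + (alpha d ν 2 * (sigma2 d ν / cConst d ν)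
                + ((d:ℝ) - 2) * (alpha d ν 2 * (sigma3 d ν / cConst d ν))))
            = (alpha d ν 1 * sigma1 d ν + alpha d ν 1 * sigma3 d ν + alpha d ν 2 * sigma2 d ν
              + ((d:ℝ) - 2) * (alpha d ν 2 * sigma3 d ν)) / cConst d ν := by
          ring
        rw [e, div_eq_zero_iff]
        left
        rw [sigma1, sigma2, sigma3]
        field_simp
        ring

lemma Sigma_inv {d : ℕ} (hd : 2 ≤ d) (ν : ℝ) : (SigmaE d ν)⁻¹ = Bmat d ν :=
  Matrix.inv_eq_right_inv (Sigma_mul_B hd ν)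

theorem betaF_general_expression' (d : ℕ) (hd : 2 ≤ d) (ν : ℝ)
    (g : Finset (Fin d) → ℝ) :
    betaF d ν g 0
        = (cConst d ν)⁻¹ *
          (sigma0 d ν * limeExp d (fun S => psi ν ((S.card : ℝ) / (d : ℝ)) * g S)
            + sigma1 d ν * ∑ k : Fin d,
                limeExp d (fun S => psi ν ((S.card : ℝ) / (d : ℝ)) *
                  (if k ∉ S then (1 : ℝ) else 0) * g S))
      ∧ ∀ j : Fin d,
        betaF d ν g j.succ
          = (cConst d ν)⁻¹ *
            (sigma1 d ν * limeExp d (fun S => psi ν ((S.card : ℝ) / (d : ℝ)) * g S)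
              + sigma2 d ν * limeExp d (fun S => psi ν ((S.card : ℝ) / (d : ℝ)) *
                  (if j ∉ S then (1 : ℝ) else 0) * g S)
              + sigma3 d ν * ∑ k ∈ Finset.univ \ {j},
                  limeExp d (fun S => psi ν ((S.card : ℝ) / (d : ℝ)) *
                    (if k ∉ S then (1 : ℝ) else 0) * g S)) := by
  have hd1 : (1:ℕ) ≤ d := by omega
  have hE0 : limeExp d (fun S => psi ν ((S.card : ℝ) / (d : ℝ)) * g S * zeta d S 0)
      = limeExp d (fun S => psi ν ((S.card : ℝ) / (d : ℝ)) * g S) :=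
    limeExp_congr fun S => by rw [zeta_zero, mul_one]
  have hEk : ∀ k : Fin d,
      limeExp d (fun S => psi ν ((S.card : ℝ) / (d : ℝ)) * g S * zeta d S k.succ)
      = limeExp d (fun S => psi ν ((S.card : ℝ) / (d : ℝ)) *
          (if k ∉ S then (1:ℝ) else 0) * g S) :=
    fun k => limeExp_congr fun S => by rw [zeta_succ]; ring
  constructor
  · rw [betaF, Sigma_inv hd ν]
    simp only [Matrix.mulVec, dotProduct]
    rw [Fin.sum_univ_succ]
    simp only [Bmat, Matrix.of_apply, Fin.cases_zero, Fin.cases_succ]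
    rw [hE0]
    have hsum : ∑ k : Fin d, sigma1 d ν / cConst d ν *
          limeExp d (fun S => psi ν ((S.card : ℝ) / (d : ℝ)) * g S * zeta d S k.succ)
        = sigma1 d ν / cConst d ν * ∑ k : Fin d,
          limeExp d (fun S => psi ν ((S.card : ℝ) / (d : ℝ)) *
            (if k ∉ S then (1:ℝ) else 0) * g S) := by
      rw [Finset.mul_sum]
      exact Finset.sum_congr rfl fun k _ => by rw [hEk k]
    rw [hsum]
    ring
  · intro j
    rw [betaF, Sigma_inv hd ν]
    simp only [Matrix.mulVec, dotProduct]
    rw [Fin.sum_univ_succ]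
    simp only [Bmat, Matrix.of_apply, Fin.cases_zero, Fin.cases_succ]
    rw [hE0]
    rw [sum_split_one (fun k => (if j = k then sigma2 d ν / cConst d ν
        else sigma3 d ν / cConst d ν) *
        limeExp d (fun S => psi ν ((S.card : ℝ) / (d : ℝ)) * g S * zeta d S k.succ)) j]
    rw [if_pos rfl, hEk j]
    have hsum : ∑ k ∈ Finset.univ.erase j, ((if j = k then sigma2 d ν / cConst d ν
          else sigma3 d ν / cConst d ν) *
          limeExp d (fun S => psi ν ((S.card : ℝ) / (d : ℝ)) * g S * zeta d S k.succ))
        = sigma3 d ν / cConst d ν * ∑ k ∈ Finset.univ.erase j,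
          limeExp d (fun S => psi ν ((S.card : ℝ) / (d : ℝ)) *
            (if k ∉ S then (1:ℝ) else 0) * g S) := by
      rw [Finset.mul_sum]
      exact Finset.sum_congr rfl fun k hk => by
        rw [if_neg (Ne.symm (Finset.ne_of_mem_erase hk)), hEk k]
    rw [hsum]
    have herase : Finset.univ \ {j} = Finset.univ.erase j := by
      rw [Finset.sdiff_singleton_eq_erase]
    rw [herase]
    ring

/-- expression of β^f for a general bounded measurable model f. -/
theorem betaF_general_expression (d : ℕ) (hd : 2 ≤ d) (ν : ℝ) (hν : 0 < ν)
    (u : Fin d → ℝ) (hu : ∀ k, 0 < u k) (f : (Fin d → ℝ) → ℝ) (hf : Measurable f)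
    (M : ℝ) (hM : 0 < M)
    (hbound : ∀ x : Fin d → ℝ, Real.sqrt (∑ i, (x i) ^ 2) ≤ 1 → |f x| ≤ M) :
    betaF d ν (fun S => f (phiS u S)) 0
        = (cConst d ν)⁻¹ *
          (sigma0 d ν * limeExp d (fun S => psi ν ((S.card : ℝ) / (d : ℝ)) * f (phiS u S))
            + sigma1 d ν * ∑ k : Fin d,
                limeExp d (fun S => psi ν ((S.card : ℝ) / (d : ℝ)) *
                  (if k ∉ S then (1 : ℝ) else 0) * f (phiS u S)))
      ∧ ∀ j : Fin d,
        betaF d ν (fun S => f (phiS u S)) j.succ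
          = (cConst d ν)⁻¹ *
            (sigma1 d ν * limeExp d (fun S => psi ν ((S.card : ℝ) / (d : ℝ)) * f (phiS u S))
              + sigma2 d ν * limeExp d (fun S => psi ν ((S.card : ℝ) / (d : ℝ)) *
                  (if j ∉ S then (1 : ℝ) else 0) * f (phiS u S))
              + sigma3 d ν * ∑ k ∈ Finset.univ \ {j},
                  limeExp d (fun S => psi ν ((S.card : ℝ) / (d : ℝ)) *
                    (if k ∉ S then (1 : ℝ) else 0) * f (phiS u S))) :=
  betaF_general_expression' d hd ν (fun S => f (phiS u S))
end
end

section
/- Let ω_1,…,ω_d be nonnegative reals with Σ_{k=1}^d ω_k = 1, and let S be the LIME random subset of {1,…,d} with H_S = Σ_{k∈S} ω_k. Then for d ≥ 2 and any 1 ≤ j ≤ d, E[H_S | j ∉ S] = (1−ω_j)(d+1)/(3(d−1)); and for d ≥ 3 and any distinct 1 ≤ j, k ≤ d, E[H_S | j ∉ S and k ∉ S] = (1−ω_j−ω_k)(d+1)/(4(d−2)). Here the conditional expectation given an event A with P(A) > 0 means E[H_S · 1_A]/P(A). -/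
noncomputable section

open Finset

-- ## Auxiliary lemmas

private lemma natkey {n s : ℕ} (hn : 1 ≤ n) (hs : s ≤ n) :
    n * (n - 1).choose s = (n - s) * n.choose s := by
  rcases eq_or_lt_of_le hs with rfl | h
  · rw [Nat.choose_eq_zero_of_lt (by omega), Nat.sub_self]; ring
  · have hs' : s ≤ n - 1 := by omega
    have h1 : (n - 1).choose s = (n - 1).choose (n - 1 - s) := (Nat.choose_symm hs').symm
    have h2 := Nat.add_one_mul_choose_eq (n - 1) (n - 1 - s)
    have e1 : n - 1 + 1 = n := by omega
    have e2 : n - 1 - s + 1 = n - s := by omega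
    rw [e1, e2] at h2
    rw [h1, h2, Nat.choose_symm (le_of_lt h), mul_comm]

private lemma natkey2 {n s : ℕ} (hn : 1 ≤ n) (hs : 1 ≤ s) :
    n * (n - 1).choose (s - 1) = s * n.choose s := by
  have h := Nat.add_one_mul_choose_eq (n - 1) (s - 1)
  have e1 : n - 1 + 1 = n := by omega
  have e2 : s - 1 + 1 = s := by omega
  rw [e1, e2] at h
  rw [h, mul_comm]

private lemma count_mem_powersetCard {α : Type*} [DecidableEq α] (A : Finset α) {l : α}
    (hl : l ∈ A) {s : ℕ} (hs : 1 ≤ s) :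
    ((A.powersetCard s).filter (fun S => l ∈ S)).card = (A.card - 1).choose (s - 1) := by
  rw [← Finset.card_erase_of_mem hl, ← Finset.card_powersetCard]
  refine Finset.card_nbij' (fun S => S.erase l) (fun T => insert l T) ?_ ?_ ?_ ?_
  · intro S hS
    simp only [mem_coe, mem_filter, mem_powersetCard] at hS
    obtain ⟨⟨hSA, hcard⟩, hlS⟩ := hS
    rw [mem_coe, mem_powersetCard]
    exact ⟨Finset.erase_subset_erase l hSA, by rw [Finset.card_erase_of_mem hlS, hcard]⟩
  · intro T hT
    rw [mem_coe, mem_powersetCard] at hT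
    obtain ⟨hTA, hcard⟩ := hT
    rw [Finset.subset_erase] at hTA
    simp only [mem_coe, mem_filter, mem_powersetCard]
    refine ⟨⟨Finset.insert_subset hl hTA.1, ?_⟩, Finset.mem_insert_self l T⟩
    rw [Finset.card_insert_of_notMem hTA.2, hcard]; omega
  · intro S hS
    simp only [mem_coe, mem_filter] at hS
    exact Finset.insert_erase hS.2
  · intro T hT
    rw [mem_coe, mem_powersetCard, Finset.subset_erase] at hT
    exact Finset.erase_insert hT.1.2

private lemma sum_sum_powersetCard {α : Type*} [DecidableEq α] (A : Finset α) (w : α → ℝ)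
    {s : ℕ} (hs : 1 ≤ s) :
    ∑ S ∈ A.powersetCard s, ∑ l ∈ S, w l
      = ((A.card - 1).choose (s - 1) : ℝ) * ∑ l ∈ A, w l := by
  have h1 : ∀ S ∈ A.powersetCard s, ∑ l ∈ S, w l = ∑ l ∈ A, if l ∈ S then w l else 0 := by
    intro S hS
    rw [mem_powersetCard] at hS
    rw [← Finset.sum_filter, Finset.filter_mem_eq_inter,
      Finset.inter_eq_right.mpr hS.1]
  rw [Finset.sum_congr rfl h1, Finset.sum_comm, Finset.mul_sum]
  refine Finset.sum_congr rfl fun l hl => ?_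
  rw [← Finset.sum_filter, Finset.sum_const, count_mem_powersetCard A hl hs, nsmul_eq_mul]

-- power sums
private lemma q1 (d : ℕ) : ∑ s ∈ Icc 1 d, (s : ℝ) = d * (d + 1) / 2 := by
  induction d with
  | zero => simp
  | succ n ih =>
      rw [Finset.sum_Icc_succ_top (by omega), ih]
      push_cast; ring

private lemma q2 (d : ℕ) : ∑ s ∈ Icc 1 d, (s : ℝ) ^ 2 = d * (d + 1) * (2 * d + 1) / 6 := by
  induction d with
  | zero => simp
  | succ n ih =>
      rw [Finset.sum_Icc_succ_top (by omega), ih]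
      push_cast; ring

private lemma q3 (d : ℕ) : ∑ s ∈ Icc 1 d, (s : ℝ) ^ 3 = (d * (d + 1) / 2) ^ 2 := by
  induction d with
  | zero => simp
  | succ n ih =>
      rw [Finset.sum_Icc_succ_top (by omega), ih]
      push_cast; ring

private lemma sumA (d : ℕ) : ∑ s ∈ Icc 1 d, ((d : ℝ) - s) = d * (d - 1) / 2 := by
  have h : ∀ s ∈ Icc 1 d, ((d : ℝ) - s) = (d : ℝ) - (s : ℝ) := fun s _ => rfl
  rw [Finset.sum_sub_distrib, Finset.sum_const, Nat.card_Icc, q1]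
  simp only [Nat.add_sub_cancel, nsmul_eq_mul]
  ring

private lemma sumB (d : ℕ) :
    ∑ s ∈ Icc 1 d, (s : ℝ) * ((d : ℝ) - s) = d * (d + 1) * (d - 1) / 6 := by
  have h : ∀ s ∈ Icc 1 d, (s : ℝ) * ((d : ℝ) - s) = (d : ℝ) * s - (s : ℝ) ^ 2 :=
    fun s _ => by ring
  rw [Finset.sum_congr rfl h, Finset.sum_sub_distrib, ← Finset.mul_sum, q1, q2]
  ring

private lemma sumC (d : ℕ) :
    ∑ s ∈ Icc 1 d, ((d : ℝ) - s) * ((d : ℝ) - s - 1) = d * (d - 1) * (d - 2) / 3 := by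
  have h : ∀ s ∈ Icc 1 d, ((d : ℝ) - s) * ((d : ℝ) - s - 1)
      = ((s : ℝ) ^ 2 - (2 * d - 1) * s) + ((d : ℝ) ^ 2 - d) := fun s _ => by ring
  rw [Finset.sum_congr rfl h, Finset.sum_add_distrib, Finset.sum_sub_distrib,
    ← Finset.mul_sum, Finset.sum_const, Nat.card_Icc, q1, q2]
  simp only [Nat.add_sub_cancel, nsmul_eq_mul]
  ring

private lemma sumD (d : ℕ) :
    ∑ s ∈ Icc 1 d, (s : ℝ) * (((d : ℝ) - s) * ((d : ℝ) - s - 1))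
      = d * (d + 1) * (d - 1) * (d - 2) / 12 := by
  have h : ∀ s ∈ Icc 1 d, (s : ℝ) * (((d : ℝ) - s) * ((d : ℝ) - s - 1))
      = ((s : ℝ) ^ 3 - (2 * d - 1) * (s : ℝ) ^ 2) + ((d : ℝ) ^ 2 - d) * s := fun s _ => by ring
  rw [Finset.sum_congr rfl h, Finset.sum_add_distrib, Finset.sum_sub_distrib,
    ← Finset.mul_sum, ← Finset.mul_sum, q1, q2, q3]
  ring

-- choose ratio lemmas over ℝ
private lemma chpos {d s : ℕ} (hs : s ≤ d) : (0 : ℝ) < (d.choose s : ℝ) := by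
  exact_mod_cast Nat.choose_pos hs

private lemma R1 {d s : ℕ} (hd : 1 ≤ d) (h1 : 1 ≤ s) (h2 : s ≤ d) :
    ((d.choose s : ℝ))⁻¹ * ((d - 1).choose s : ℝ) = ((d : ℝ) - s) / d := by
  have h := natkey hd h2
  have hc : ((d : ℝ)) * ((d - 1).choose s : ℝ) = ((d : ℝ) - s) * (d.choose s : ℝ) := by
    have := congrArg (fun x : ℕ => (x : ℝ)) h
    push_cast [Nat.cast_sub h2] at this
    linarith
  have hd0 : (d : ℝ) ≠ 0 := by positivity
  have hch := (chpos h2).ne'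
  field_simp
  nlinarith [hc]

private lemma R2 {d s : ℕ} (hd : 2 ≤ d) (h1 : 1 ≤ s) (h2 : s ≤ d) :
    ((d.choose s : ℝ))⁻¹ * ((d - 2).choose (s - 1) : ℝ)
      = (s : ℝ) * ((d : ℝ) - s) / ((d : ℝ) * ((d : ℝ) - 1)) := by
  have ha : (d - 1) * (d - 2).choose (s - 1) = (d - s) * (d - 1).choose (s - 1) := by
    have := natkey (n := d - 1) (s := s - 1) (by omega) (by omega)
    have e : d - 1 - 1 = d - 2 := by omega
    have e2 : d - 1 - (s - 1) = d - s := by omega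
    rw [e, e2] at this; exact this
  have hb := natkey2 (n := d) (s := s) (by omega) h1
  have hnat : d * ((d - 1) * (d - 2).choose (s - 1)) = (d - s) * (s * d.choose s) := by
    rw [ha]
    calc d * ((d - s) * (d - 1).choose (s - 1))
        = (d - s) * (d * (d - 1).choose (s - 1)) := by ring
      _ = (d - s) * (s * d.choose s) := by rw [hb]
  have hc : (d : ℝ) * (((d : ℝ) - 1) * ((d - 2).choose (s - 1) : ℝ))
      = ((d : ℝ) - s) * ((s : ℝ) * (d.choose s : ℝ)) := by
    have := congrArg (fun x : ℕ => (x : ℝ)) hnat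
    push_cast [Nat.cast_sub h2, Nat.cast_sub (by omega : 1 ≤ d)] at this
    linarith
  have hd0 : (d : ℝ) ≠ 0 := by positivity
  have hd1 : (d : ℝ) - 1 ≠ 0 := by
    have : (2 : ℝ) ≤ (d : ℝ) := by exact_mod_cast hd
    linarith
  have hch := (chpos h2).ne'
  field_simp
  nlinarith [hc]

private lemma R3 {d s : ℕ} (hd : 2 ≤ d) (h2 : s ≤ d) :
    ((d.choose s : ℝ))⁻¹ * ((d - 2).choose s : ℝ)
      = ((d : ℝ) - s) * ((d : ℝ) - s - 1) / ((d : ℝ) * ((d : ℝ) - 1)) := by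
  have hd0 : (d : ℝ) ≠ 0 := by positivity
  have hd1 : (d : ℝ) - 1 ≠ 0 := by
    have : (2 : ℝ) ≤ (d : ℝ) := by exact_mod_cast hd
    linarith
  have hch := (chpos h2).ne'
  rcases eq_or_lt_of_le h2 with heq | h
  · have h0 : (d - 2).choose s = 0 := Nat.choose_eq_zero_of_lt (by omega)
    rw [h0, heq]
    simp
  · -- s ≤ d - 1
    have hs' : s ≤ d - 1 := by omega
    have ha := natkey (n := d) (s := s) (by omega) h2
    have hb : (d - 1) * (d - 2).choose s = (d - 1 - s) * (d - 1).choose s := by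
      have := natkey (n := d - 1) (s := s) (by omega) hs'
      have e : d - 1 - 1 = d - 2 := by omega
      rw [e] at this; exact this
    have hnat : d * ((d - 1) * (d - 2).choose s) = (d - s) * ((d - 1 - s) * d.choose s) := by
      rw [hb]
      calc d * ((d - 1 - s) * (d - 1).choose s)
          = (d - 1 - s) * (d * (d - 1).choose s) := by ring
        _ = (d - 1 - s) * ((d - s) * d.choose s) := by rw [ha]
        _ = (d - s) * ((d - 1 - s) * d.choose s) := by ring
    have hc : (d : ℝ) * (((d : ℝ) - 1) * ((d - 2).choose s : ℝ))
        = ((d : ℝ) - s) * ((((d : ℝ) - s) - 1) * (d.choose s : ℝ)) := by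
      have := congrArg (fun x : ℕ => (x : ℝ)) hnat
      have e1 : ((d - 1 - s : ℕ) : ℝ) = (d : ℝ) - s - 1 := by
        push_cast [Nat.cast_sub (show s ≤ d - 1 by omega), Nat.cast_sub (by omega : 1 ≤ d)]
        ring
      push_cast [Nat.cast_sub h2, Nat.cast_sub (by omega : 1 ≤ d),
        Nat.cast_sub (show s ≤ d - 1 by omega)] at this
      linarith
    field_simp
    nlinarith [hc]

private lemma R4 {d s : ℕ} (hd : 3 ≤ d) (h1 : 1 ≤ s) (h2 : s ≤ d) :
    ((d.choose s : ℝ))⁻¹ * ((d - 3).choose (s - 1) : ℝ)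
      = (s : ℝ) * (((d : ℝ) - s) * ((d : ℝ) - s - 1)) / ((d : ℝ) * ((d : ℝ) - 1) * ((d : ℝ) - 2)) := by
  have hd0 : (d : ℝ) ≠ 0 := by positivity
  have hdd : (3 : ℝ) ≤ (d : ℝ) := by exact_mod_cast hd
  have hd1 : (d : ℝ) - 1 ≠ 0 := by linarith
  have hd2 : (d : ℝ) - 2 ≠ 0 := by linarith
  have hch := (chpos h2).ne'
  rcases eq_or_lt_of_le h2 with heq | h
  · have h0 : (d - 3).choose (s - 1) = 0 := Nat.choose_eq_zero_of_lt (by omega)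
    rw [h0, heq]
    simp
  · have hs' : s ≤ d - 1 := by omega
    -- (d-2) * C(d-3, s-1) = (d-1-s) * C(d-2, s-1)
    have hb : (d - 2) * (d - 3).choose (s - 1) = (d - 1 - s) * (d - 2).choose (s - 1) := by
      have := natkey (n := d - 2) (s := s - 1) (by omega) (by omega)
      have e : d - 2 - 1 = d - 3 := by omega
      have e2 : d - 2 - (s - 1) = d - 1 - s := by omega
      rw [e, e2] at this; exact this
    -- d(d-1) C(d-2,s-1) = s (d-s) C(d,s)
    have ha : (d - 1) * (d - 2).choose (s - 1) = (d - s) * (d - 1).choose (s - 1) := by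
      have := natkey (n := d - 1) (s := s - 1) (by omega) (by omega)
      have e : d - 1 - 1 = d - 2 := by omega
      have e2 : d - 1 - (s - 1) = d - s := by omega
      rw [e, e2] at this; exact this
    have hbb := natkey2 (n := d) (s := s) (by omega) h1
    have hnat : d * ((d - 1) * ((d - 2) * (d - 3).choose (s - 1)))
        = s * ((d - s) * ((d - 1 - s) * d.choose s)) := by
      rw [hb]
      calc d * ((d - 1) * ((d - 1 - s) * (d - 2).choose (s - 1)))
          = (d - 1 - s) * (d * ((d - 1) * (d - 2).choose (s - 1))) := by ring
        _ = (d - 1 - s) * (d * ((d - s) * (d - 1).choose (s - 1))) := by rw [ha]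
        _ = (d - 1 - s) * ((d - s) * (d * (d - 1).choose (s - 1))) := by ring
        _ = (d - 1 - s) * ((d - s) * (s * d.choose s)) := by rw [hbb]
        _ = s * ((d - s) * ((d - 1 - s) * d.choose s)) := by ring
    have hc : (d : ℝ) * (((d : ℝ) - 1) * (((d : ℝ) - 2) * ((d - 3).choose (s - 1) : ℝ)))
        = (s : ℝ) * (((d : ℝ) - s) * ((((d : ℝ) - s) - 1) * (d.choose s : ℝ))) := by
      have := congrArg (fun x : ℕ => (x : ℝ)) hnat
      push_cast [Nat.cast_sub h2, Nat.cast_sub (by omega : 1 ≤ d),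
        Nat.cast_sub (by omega : 2 ≤ d), Nat.cast_sub (show s ≤ d - 1 by omega)] at this
      linarith
    field_simp
    nlinarith [hc]

-- filter identification
private lemma filter_eq_powersetCard {α : Type*} [DecidableEq α] [Fintype α]
    (A : Finset α) (s : ℕ) (p : Finset α → Prop) [DecidablePred p]
    (hp : ∀ S : Finset α, p S ↔ S ⊆ A) :
    (Finset.univ.filter (fun S : Finset α => S.card = s)).filter p = A.powersetCard s := by
  ext S
  simp only [mem_filter, mem_powersetCard, mem_univ, true_and, hp]
  tauto

/-- conditional expectations of H_S = ∑_{k∈S} ω_k under the LIME law: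
E[H_S | j ∉ S] = (1−ω_j)(d+1)/(3(d−1)) for d ≥ 2, and
E[H_S | j ∉ S, k ∉ S] = (1−ω_j−ω_k)(d+1)/(4(d−2)) for d ≥ 3 and j ≠ k,
where E[· | A] = E[· 1_A]/P(A). -/
theorem conditional_expectation_HS (d : ℕ) (w : Fin d → ℝ)
    (hw : ∀ k, 0 ≤ w k) (hsum : ∑ k, w k = 1) :
    (2 ≤ d → ∀ j : Fin d,
        limeExp d (fun S => if j ∉ S then ∑ k ∈ S, w k else 0) /
            limeExp d (fun S => if j ∉ S then (1 : ℝ) else 0)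
          = (1 - w j) * ((d : ℝ) + 1) / (3 * ((d : ℝ) - 1)))
      ∧ (3 ≤ d → ∀ j k : Fin d, j ≠ k →
        limeExp d (fun S => if j ∉ S ∧ k ∉ S then ∑ l ∈ S, w l else 0) /
            limeExp d (fun S => if j ∉ S ∧ k ∉ S then (1 : ℝ) else 0)
          = (1 - w j - w k) * ((d : ℝ) + 1) / (4 * ((d : ℝ) - 2))) := by
  constructor
  · intro hd j
    have hdR : (2 : ℝ) ≤ (d : ℝ) := by exact_mod_cast hd
    have hd0 : (d : ℝ) ≠ 0 := by linarith
    have hd1 : (d : ℝ) - 1 ≠ 0 := by linarith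
    set A : Finset (Fin d) := Finset.univ.erase j with hA
    have hpA : ∀ S : Finset (Fin d), (j ∉ S) ↔ S ⊆ A := by
      intro S
      rw [hA, Finset.subset_erase]
      simp [Finset.subset_univ]
    have hcardA : A.card = d - 1 := by
      rw [hA, Finset.card_erase_of_mem (Finset.mem_univ j), Finset.card_univ, Fintype.card_fin]
    have hsumA : ∑ l ∈ A, w l = 1 - w j := by
      rw [hA, Finset.sum_erase_eq_sub (Finset.mem_univ j), hsum]
    have hden : limeExp d (fun S => if j ∉ S then (1 : ℝ) else 0) = ((d : ℝ) - 1) / (2 * d) := by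
      unfold limeExp
      have h1 : ∀ s ∈ Icc 1 d, ((d.choose s : ℝ))⁻¹ *
          ∑ S ∈ Finset.univ.filter (fun S : Finset (Fin d) => S.card = s),
            (if j ∉ S then (1 : ℝ) else 0)
          = ((d : ℝ) - s) / d := by
        intro s hs
        rw [mem_Icc] at hs
        rw [← Finset.sum_filter, filter_eq_powersetCard A s _ hpA, Finset.sum_const,
          Finset.card_powersetCard, hcardA, nsmul_eq_mul, mul_one, R1 (by omega) hs.1 hs.2]
      rw [Finset.sum_congr rfl h1, ← Finset.sum_div, sumA]
      field_simp
    have hnum : limeExp d (fun S => if j ∉ S then ∑ k ∈ S, w k else 0)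
        = (1 - w j) * ((d : ℝ) + 1) / (6 * d) := by
      unfold limeExp
      have h1 : ∀ s ∈ Icc 1 d, ((d.choose s : ℝ))⁻¹ *
          ∑ S ∈ Finset.univ.filter (fun S : Finset (Fin d) => S.card = s),
            (if j ∉ S then ∑ k ∈ S, w k else 0)
          = (s : ℝ) * ((d : ℝ) - s) * ((1 - w j) / ((d : ℝ) * ((d : ℝ) - 1))) := by
        intro s hs
        rw [mem_Icc] at hs
        rw [← Finset.sum_filter, filter_eq_powersetCard A s _ hpA,
          sum_sum_powersetCard A w hs.1, hsumA, hcardA]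
        have e : d - 1 - 1 = d - 2 := by omega
        rw [e, ← mul_assoc, R2 hd hs.1 hs.2]
        ring
      rw [Finset.sum_congr rfl h1, ← Finset.sum_mul, sumB]
      field_simp
    rw [hnum, hden]
    field_simp
    ring
  · intro hd j k hjk
    have hdR : (3 : ℝ) ≤ (d : ℝ) := by exact_mod_cast hd
    have hd0 : (d : ℝ) ≠ 0 := by linarith
    have hd1 : (d : ℝ) - 1 ≠ 0 := by linarith
    have hd2 : (d : ℝ) - 2 ≠ 0 := by linarith
    set A : Finset (Fin d) := (Finset.univ.erase j).erase k with hA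
    have hpA : ∀ S : Finset (Fin d), (j ∉ S ∧ k ∉ S) ↔ S ⊆ A := by
      intro S
      rw [hA, Finset.subset_erase, Finset.subset_erase]
      simp [Finset.subset_univ]
    have hkj : k ∈ Finset.univ.erase j := by
      rw [Finset.mem_erase]
      exact ⟨hjk.symm, Finset.mem_univ k⟩
    have hcardA : A.card = d - 2 := by
      rw [hA, Finset.card_erase_of_mem hkj, Finset.card_erase_of_mem (Finset.mem_univ j),
        Finset.card_univ, Fintype.card_fin]
      omega
    have hsumA : ∑ l ∈ A, w l = 1 - w j - w k := by
      rw [hA, Finset.sum_erase_eq_sub hkj, Finset.sum_erase_eq_sub (Finset.mem_univ j), hsum]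
    have hden : limeExp d (fun S => if j ∉ S ∧ k ∉ S then (1 : ℝ) else 0)
        = ((d : ℝ) - 2) / (3 * d) := by
      unfold limeExp
      have h1 : ∀ s ∈ Icc 1 d, ((d.choose s : ℝ))⁻¹ *
          ∑ S ∈ Finset.univ.filter (fun S : Finset (Fin d) => S.card = s),
            (if j ∉ S ∧ k ∉ S then (1 : ℝ) else 0)
          = ((d : ℝ) - s) * ((d : ℝ) - s - 1) / ((d : ℝ) * ((d : ℝ) - 1)) := by
        intro s hs
        rw [mem_Icc] at hs
        rw [← Finset.sum_filter, filter_eq_powersetCard A s _ hpA, Finset.sum_const,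
          Finset.card_powersetCard, hcardA, nsmul_eq_mul, mul_one, R3 (by omega) hs.2]
      rw [Finset.sum_congr rfl h1, ← Finset.sum_div]
      have h2 : ∑ s ∈ Icc 1 d, ((d : ℝ) - s) * ((d : ℝ) - s - 1) = d * (d - 1) * (d - 2) / 3 :=
        sumC d
      rw [h2]
      field_simp
    have hnum : limeExp d (fun S => if j ∉ S ∧ k ∉ S then ∑ l ∈ S, w l else 0)
        = (1 - w j - w k) * ((d : ℝ) + 1) / (12 * d) := by
      unfold limeExp
      have h1 : ∀ s ∈ Icc 1 d, ((d.choose s : ℝ))⁻¹ *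
          ∑ S ∈ Finset.univ.filter (fun S : Finset (Fin d) => S.card = s),
            (if j ∉ S ∧ k ∉ S then ∑ l ∈ S, w l else 0)
          = (s : ℝ) * (((d : ℝ) - s) * ((d : ℝ) - s - 1))
              * ((1 - w j - w k) / ((d : ℝ) * ((d : ℝ) - 1) * ((d : ℝ) - 2))) := by
        intro s hs
        rw [mem_Icc] at hs
        rw [← Finset.sum_filter, filter_eq_powersetCard A s _ hpA,
          sum_sum_powersetCard A w hs.1, hsumA, hcardA]
        have e : d - 2 - 1 = d - 3 := by omega
        rw [e, ← mul_assoc, R4 hd hs.1 hs.2]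
        ring
      rw [Finset.sum_congr rfl h1, ← Finset.sum_mul, sumD]
      field_simp
    rw [hnum, hden]
    field_simp
    ring
end
end
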